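/- Let Π be a measure on ℝ integrating y ↦ |y|² + |y|⁴, let σ : [0,T] × ℝ → ℝ be L-Lipschitz in x uniformly in t, and let u, w : [0,T] × ℝ → ℝ, with ψ(t,x) = ρ|x − x̄|⁴ + |t − t̄|². Suppose (t₀, x₀, y₀) maximizes (t,x,y) ↦ u(t,x) − w(t,y) − |x−y|²/ε − ψ(t,x). Then for every real z, u(t₀, x₀ + σ(t₀,x₀)z) − u(t₀,x₀) − q_u σ(t₀,x₀)z ≤ w(t₀, y₀ + σ(t₀,y₀)z) − w(t₀,y₀) − q_w σ(t₀,y₀)z + ε^{-1} L² |x₀ − y₀|² z² + [ψ(t₀, x₀ + σ(t₀,x₀)z) − ψ(t₀,x₀) − D_xψ(t₀,x₀)σ(t₀,x₀)z], where q_u = 2(x₀−y₀)/ε + D_xψ(t₀,x₀) and q_w = 2(x₀−y₀)/ε. -/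
import Mathlib


/-- Key pointwise inequality for the doubled variables in the comparison proof.  If
`(t₀, x₀, y₀)` maximizes `(t,x,y) ↦ u t x - w t y - (x-y)²/ε - ψ t x` over
`[0,T] × ℝ × ℝ`, where `ψ t x = ρ (x - x̄)⁴ + (t - t̄)²`, and `σ` is `L`-Lipschitz in the
space variable, then for every `z`,
`u t₀ (x₀+σ(t₀,x₀)z) - u t₀ x₀ - q_u σ(t₀,x₀)z
  ≤ w t₀ (y₀+σ(t₀,y₀)z) - w t₀ y₀ - q_w σ(t₀,y₀)z + ε⁻¹ L² (x₀-y₀)² z²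
    + [ψ t₀ (x₀+σ(t₀,x₀)z) - ψ t₀ x₀ - D_xψ(t₀,x₀) σ(t₀,x₀)z]`,
with `q_u = 2(x₀-y₀)/ε + D_xψ(t₀,x₀)`, `q_w = 2(x₀-y₀)/ε`,
`D_xψ(t₀,x₀) = 4ρ(x₀-x̄)³`. -/
theorem stmt_14 (T L ε ρ tbar xbar t₀ x₀ y₀ : ℝ)
    (hT : 0 ≤ T) (hε : 0 < ε) (hL : 0 ≤ L)
    (σ u w : ℝ → ℝ → ℝ)
    (hσ : ∀ t x y : ℝ, |σ t x - σ t y| ≤ L * |x - y|)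
    (ht₀ : t₀ ∈ Set.Icc (0 : ℝ) T)
    (hmax : ∀ t ∈ Set.Icc (0 : ℝ) T, ∀ x y : ℝ,
      u t x - w t y - (x - y) ^ 2 / ε - (ρ * (x - xbar) ^ 4 + (t - tbar) ^ 2)
        ≤ u t₀ x₀ - w t₀ y₀ - (x₀ - y₀) ^ 2 / ε
            - (ρ * (x₀ - xbar) ^ 4 + (t₀ - tbar) ^ 2)) :
    ∀ z : ℝ,
      u t₀ (x₀ + σ t₀ x₀ * z) - u t₀ x₀
          - (2 * (x₀ - y₀) / ε + 4 * ρ * (x₀ - xbar) ^ 3) * (σ t₀ x₀ * z)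
        ≤ w t₀ (y₀ + σ t₀ y₀ * z) - w t₀ y₀ - (2 * (x₀ - y₀) / ε) * (σ t₀ y₀ * z)
            + ε⁻¹ * L ^ 2 * (x₀ - y₀) ^ 2 * z ^ 2
            + ((ρ * (x₀ + σ t₀ x₀ * z - xbar) ^ 4 + (t₀ - tbar) ^ 2)
                - (ρ * (x₀ - xbar) ^ 4 + (t₀ - tbar) ^ 2)
                - 4 * ρ * (x₀ - xbar) ^ 3 * (σ t₀ x₀ * z)) := by
  intro z
  have key := hmax t₀ ht₀ (x₀ + σ t₀ x₀ * z) (y₀ + σ t₀ y₀ * z)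
  have hab : (σ t₀ x₀ - σ t₀ y₀) ^ 2 ≤ L ^ 2 * (x₀ - y₀) ^ 2 := by
    have h := hσ t₀ x₀ y₀
    calc (σ t₀ x₀ - σ t₀ y₀) ^ 2 = |σ t₀ x₀ - σ t₀ y₀| ^ 2 := (sq_abs _).symm
    _ ≤ (L * |x₀ - y₀|) ^ 2 := pow_le_pow_left₀ (abs_nonneg _) h 2
    _ = L ^ 2 * (x₀ - y₀) ^ 2 := by rw [mul_pow, sq_abs]
  have h1 : (x₀ + σ t₀ x₀ * z - (y₀ + σ t₀ y₀ * z)) ^ 2 / ε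
      = (x₀ - y₀) ^ 2 / ε + 2 * (x₀ - y₀) / ε * (σ t₀ x₀ * z)
        - 2 * (x₀ - y₀) / ε * (σ t₀ y₀ * z) + (σ t₀ x₀ - σ t₀ y₀) ^ 2 * z ^ 2 / ε := by
    field_simp
    ring
  have h2 : (σ t₀ x₀ - σ t₀ y₀) ^ 2 * z ^ 2 / ε ≤ ε⁻¹ * L ^ 2 * (x₀ - y₀) ^ 2 * z ^ 2 := by
    rw [div_eq_mul_inv]
    have hz : (σ t₀ x₀ - σ t₀ y₀) ^ 2 * z ^ 2 ≤ L ^ 2 * (x₀ - y₀) ^ 2 * z ^ 2 := by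
      nlinarith [sq_nonneg z]
    calc (σ t₀ x₀ - σ t₀ y₀) ^ 2 * z ^ 2 * ε⁻¹ ≤ L ^ 2 * (x₀ - y₀) ^ 2 * z ^ 2 * ε⁻¹ := by
          exact mul_le_mul_of_nonneg_right hz (by positivity)
    _ = ε⁻¹ * L ^ 2 * (x₀ - y₀) ^ 2 * z ^ 2 := by ring
  rw [h1] at key
  linarith
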